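/- If two compatible words x, y of equal length satisfy diff(x,y) = (u,v), then exactly one of u, v consists only of Σ-letters and the other only of Γ-letters (allowing either to be empty), and u, v are uniquely determined by x and y. -/

import Mathlib

open List

/-- A language is regular. -/
def IsReg {α : Type} (L : Set (List α)) : Prop := Language.IsRegular L

/-- Erase output letters: keep the Σ-part of a synchronization word. -/
def piIn {σ γ : Type} (w : List (σ ⊕ γ)) : List σ := w.filterMap Sum.getLeft?
/-- Erase input letters: keep the Γ-part of a synchronization word. -/
def piOut {σ γ : Type} (w : List (σ ⊕ γ)) : List γ := w.filterMap Sum.getRight?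
/-- `⟦w⟧`, the pair synchronized by `w`. -/
def syncPair {σ γ : Type} (w : List (σ ⊕ γ)) : List σ × List γ := (piIn w, piOut w)
/-- `⟦L⟧`, the relation defined by a synchronization language. -/
def syncRel {σ γ : Type} (L : Set (List (σ ⊕ γ))) : Set (List σ × List γ) := syncPair '' L

def rdom {σ γ : Type} (R : Set (List σ × List γ)) : Set (List σ) := {u | ∃ v, (u, v) ∈ R}

/-- A recognizable relation: a finite union of products of regular languages. -/
def Recognizable {σ γ : Type} (R : Set (List σ × List γ)) : Prop :=
  ∃ (n : ℕ) (U : Fin n → Set (List σ)) (V : Fin n → Set (List γ)),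
    (∀ i, IsReg (U i) ∧ IsReg (V i)) ∧
    R = ⋃ i, {p : List σ × List γ | p.1 ∈ U i ∧ p.2 ∈ V i}

/-- lag of the (1-based) position `i` of `w`. -/
def lagAt {σ γ : Type} (w : List (σ ⊕ γ)) (i : ℕ) : ℕ :=
  ((((w.take i).countP Sum.isLeft : ℕ) : ℤ) - (((w.take i).countP Sum.isRight : ℕ) : ℤ)).natAbs

/-- maximal lag of a position of `w`. -/
def lagW {σ γ : Type} (w : List (σ ⊕ γ)) : ℕ := (Finset.range (w.length + 1)).sup (lagAt w)

/-- number of shifts of `w`. -/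
def shiftCount {σ γ : Type} (w : List (σ ⊕ γ)) : ℕ :=
  (w.zip w.tail).countP fun p => p.1.isLeft != p.2.isLeft

/-- the (0-based) list of shift positions of `w`, in increasing order. -/
def shiftList {σ γ : Type} (w : List (σ ⊕ γ)) : List ℕ :=
  (List.range w.length).filter fun j =>
    decide (j + 1 < w.length) &&
      decide ((w[j]?).map Sum.isLeft ≠ (w[j + 1]?).map Sum.isLeft)

/-- shiftlag of `w`: the largest `n` such that `w` has `n` consecutive shifts that are all
`≥n`-lagged. -/
noncomputable def shiftlagW {σ γ : Type} (w : List (σ ⊕ γ)) : ℕ :=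
  sSup {n : ℕ | ∃ l : List ℕ, l <:+: shiftList w ∧ l.length = n ∧ ∀ j ∈ l, n ≤ lagAt w (j + 1)}

def FiniteShift {σ γ : Type} (L : Set (List (σ ⊕ γ))) : Prop := ∃ k, ∀ w ∈ L, shiftCount w ≤ k
def FiniteLag {σ γ : Type} (L : Set (List (σ ⊕ γ))) : Prop := ∃ k, ∀ w ∈ L, lagW w ≤ k
def FiniteShiftlag {σ γ : Type} (L : Set (List (σ ⊕ γ))) : Prop := ∃ k, ∀ w ∈ L, shiftlagW w ≤ k

/-- left quotient `u⁻¹L`. -/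
def leftQuot {α : Type} (u : List α) (L : Set (List α)) : Set (List α) := {z | u ++ z ∈ L}

/-- `w ⪯_T w'` : `w` is at most as synchronous as `w'` inside `T`. -/
def syncLe {σ γ : Type} (T : Set (List (σ ⊕ γ))) (w w' : List (σ ⊕ γ)) : Prop :=
  ∀ i : ℕ, FiniteShift (leftQuot (w'.take i) T) → FiniteShift (leftQuot (w.take i) T)

def allsync {σ γ : Type} (S T : Set (List (σ ⊕ γ))) : Set (List (σ ⊕ γ)) :=
  {w | w ∈ T ∧ syncPair w ∈ syncRel S}

def maxsync {σ γ : Type} (S T : Set (List (σ ⊕ γ))) : Set (List (σ ⊕ γ)) :=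
  {w | w ∈ T ∧ syncPair w ∈ syncRel S ∧
    ∀ w' ∈ T, syncPair w' = syncPair w → syncLe T w' w}

def minsync {σ γ : Type} (S T : Set (List (σ ⊕ γ))) : Set (List (σ ⊕ γ)) :=
  {w | w ∈ T ∧ syncPair w ∈ syncRel S ∧
    ∀ w' ∈ T, syncPair w' = syncPair w → syncLe T w w'}

/-- `Rel(T)`: relations definable by regular subsets of `T`. -/
def RelOf {σ γ : Type} (T : Set (List (σ ⊕ γ))) : Set (Set (List σ × List γ)) :=
  {R | ∃ T' : Set (List (σ ⊕ γ)), T' ⊆ T ∧ IsReg T' ∧ syncRel T' = R}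

/-- the canonical synchronization language `(ΣΓ)*(Σ* + Γ*)` of automatic relations. -/
def CanonAut (σ γ : Type) : Set (List (σ ⊕ γ)) :=
  {w | ∃ (p : List (σ × γ)) (x : List σ) (y : List γ),
    (x = [] ∨ y = []) ∧
    w = (p.flatMap fun ab => [Sum.inl ab.1, Sum.inr ab.2]) ++ x.map Sum.inl ++ y.map Sum.inr}

/-- the canonical synchronization language `Σ*Γ*` of recognizable relations. -/
def InOut (σ γ : Type) : Set (List (σ ⊕ γ)) :=
  {w | ∃ (x : List σ) (y : List γ), w = x.map Sum.inl ++ y.map Sum.inr}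

/-- An automatic relation: definable by a regular subset of `(ΣΓ)*(Σ* + Γ*)`. -/
def Automatic {σ γ : Type} (R : Set (List σ × List γ)) : Prop :=
  ∃ L : Set (List (σ ⊕ γ)), L ⊆ CanonAut σ γ ∧ IsReg L ∧ syncRel L = R

/-- `x` and `y` are compatible: equal length and extendable to a common pair. -/
def Compatible {σ γ : Type} (x y : List (σ ⊕ γ)) : Prop :=
  x.length = y.length ∧ ∃ u v : List (σ ⊕ γ), syncPair (x ++ u) = syncPair (y ++ v)

/-- `diff(x,y) = (u,v)`: `u,v` are the shortest words with `⟦xu⟧ = ⟦yv⟧`. -/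
def IsDiff {σ γ : Type} (x y u v : List (σ ⊕ γ)) : Prop :=
  syncPair (x ++ u) = syncPair (y ++ v) ∧
    ∀ u' v' : List (σ ⊕ γ), syncPair (x ++ u') = syncPair (y ++ v') →
      u.length ≤ u'.length ∧ v.length ≤ v'.length

lemma piIn_append {σ γ : Type} (a b : List (σ ⊕ γ)) : piIn (a ++ b) = piIn a ++ piIn b :=
  List.filterMap_append ..

lemma piOut_append {σ γ : Type} (a b : List (σ ⊕ γ)) : piOut (a ++ b) = piOut a ++ piOut b :=
  List.filterMap_append ..

lemma length_piIn_add {σ γ : Type} (w : List (σ ⊕ γ)) :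
    (piIn w).length + (piOut w).length = w.length := by
  induction w with
  | nil => simp [piIn, piOut]
  | cons a l ih =>
    cases a <;> simp [piIn, piOut, List.filterMap_cons] at * <;> omega

lemma piIn_cons_inl {σ γ : Type} (a : σ) (l : List (σ ⊕ γ)) :
    piIn (Sum.inl a :: l) = a :: piIn l := by simp [piIn, List.filterMap_cons]

lemma piIn_cons_inr {σ γ : Type} (b : γ) (l : List (σ ⊕ γ)) :
    piIn (Sum.inr b :: l) = piIn l := by simp [piIn, List.filterMap_cons]

lemma piOut_cons_inl {σ γ : Type} (a : σ) (l : List (σ ⊕ γ)) :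
    piOut (Sum.inl a :: l) = piOut l := by simp [piOut, List.filterMap_cons]

lemma piOut_cons_inr {σ γ : Type} (b : γ) (l : List (σ ⊕ γ)) :
    piOut (Sum.inr b :: l) = b :: piOut l := by simp [piOut, List.filterMap_cons]

lemma piIn_map_inr {σ γ : Type} (t : List γ) :
    piIn (t.map Sum.inr : List (σ ⊕ γ)) = [] := by
  simp [piIn, List.filterMap_map, Function.comp]

lemma piOut_map_inr {σ γ : Type} (t : List γ) :
    piOut (t.map Sum.inr : List (σ ⊕ γ)) = t := by
  induction t with
  | nil => simp [piOut]
  | cons a l ih => simpa [piOut_cons_inr] using ih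

lemma piIn_map_inl {σ γ : Type} (t : List σ) :
    piIn (t.map Sum.inl : List (σ ⊕ γ)) = t := by
  induction t with
  | nil => simp [piIn]
  | cons a l ih => simpa [piIn_cons_inl] using ih

lemma piOut_map_inl {σ γ : Type} (t : List σ) :
    piOut (t.map Sum.inl : List (σ ⊕ γ)) = [] := by
  simp [piOut, List.filterMap_map, Function.comp]

lemma eq_map_inr_of_piIn_nil {σ γ : Type} (u : List (σ ⊕ γ)) (h : piIn u = []) :
    u = (piOut u).map Sum.inr := by
  induction u with
  | nil => simp [piOut]
  | cons a l ih =>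
    cases a with
    | inl a => simp [piIn_cons_inl] at h
    | inr b =>
      rw [piIn_cons_inr] at h
      rw [piOut_cons_inr, List.map_cons, ← ih h]

lemma eq_map_inl_of_piOut_nil {σ γ : Type} (u : List (σ ⊕ γ)) (h : piOut u = []) :
    u = (piIn u).map Sum.inl := by
  induction u with
  | nil => simp [piIn]
  | cons a l ih =>
    cases a with
    | inr a => simp [piOut_cons_inr] at h
    | inl b =>
      rw [piOut_cons_inl] at h
      rw [piIn_cons_inl, List.map_cons, ← ih h]

lemma syncPair_eq_iff {σ γ : Type} (a b : List (σ ⊕ γ)) :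
    syncPair a = syncPair b ↔ piIn a = piIn b ∧ piOut a = piOut b := by
  simp [syncPair, Prod.ext_iff]

lemma isDiff_symm {σ γ : Type} {x y u v : List (σ ⊕ γ)} (h : IsDiff x y u v) :
    IsDiff y x v u :=
  ⟨h.1.symm, fun u' v' h' => (h.2 v' u' h'.symm).symm⟩

lemma key_lemma {σ γ : Type} {x y u v : List (σ ⊕ γ)} {s : List σ} {t : List γ}
    (hs : piIn x = piIn y ++ s) (ht : piOut y = piOut x ++ t)
    (hd : IsDiff x y u v) : u = t.map Sum.inr ∧ v = s.map Sum.inl := by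
  obtain ⟨heq, hmin⟩ := hd
  rw [syncPair_eq_iff, piIn_append, piIn_append, piOut_append, piOut_append, hs, ht,
    List.append_assoc] at heq
  obtain ⟨h1, h2⟩ := heq
  have hv' : piIn v = s ++ piIn u := (List.append_cancel_left h1).symm
  have hu' : piOut u = t ++ piOut v := by
    rw [List.append_assoc] at h2; exact List.append_cancel_left h2
  have hcand : syncPair (x ++ t.map Sum.inr) = syncPair (y ++ s.map Sum.inl) := by
    rw [syncPair_eq_iff, piIn_append, piIn_append, piOut_append, piOut_append,
      piIn_map_inr, piOut_map_inr, piIn_map_inl, piOut_map_inl, hs, ht]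
    simp
  obtain ⟨hul, hvl⟩ := hmin _ _ hcand
  rw [List.length_map] at hul hvl
  have l1 := length_piIn_add u
  have l2 := length_piIn_add v
  have l3 : (piOut u).length = t.length + (piOut v).length := by rw [hu']; simp
  have l4 : (piIn v).length = s.length + (piIn u).length := by rw [hv']; simp
  have hin : (piIn u).length = 0 := by omega
  have hout : (piOut v).length = 0 := by omega
  rw [List.length_eq_zero_iff] at hin hout
  constructor
  · rw [eq_map_inr_of_piIn_nil u hin, hu', hout, List.append_nil]
  · rw [eq_map_inl_of_piOut_nil v hout, hv', hin, List.append_nil]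

/-- if compatible words `x, y` of equal length satisfy `diff(x,y) = (u,v)`,
then one of `u, v` consists only of Σ-letters and the other only of Γ-letters (either may be
empty), and `u, v` are uniquely determined by `x` and `y`. -/
theorem stmt14 {σ γ : Type} (x y u v : List (σ ⊕ γ))
    (hlen : x.length = y.length) (hc : Compatible x y) (hd : IsDiff x y u v) :
    (((∀ c ∈ u, c.isLeft = true) ∧ (∀ c ∈ v, c.isRight = true)) ∨
     ((∀ c ∈ u, c.isRight = true) ∧ (∀ c ∈ v, c.isLeft = true))) ∧
    (∀ u' v', IsDiff x y u' v' → u' = u ∧ v' = v) := by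
  have heq := hd.1
  rw [syncPair_eq_iff, piIn_append, piIn_append, piOut_append, piOut_append] at heq
  obtain ⟨h1, h2⟩ := heq
  have llen : (piIn x).length + (piOut x).length = (piIn y).length + (piOut y).length := by
    rw [length_piIn_add, length_piIn_add, hlen]
  rcases le_or_gt (piIn y).length (piIn x).length with hle | hlt
  · -- piIn y prefix of piIn x, piOut x prefix of piOut y
    have hpy : piIn y <+: piIn x ++ piIn u := by rw [h1]; exact List.prefix_append _ _
    have hpx : piIn y <+: piIn x :=
      List.prefix_of_prefix_length_le hpy (List.prefix_append _ _) hle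
    have hpy2 : piOut y <+: piOut x ++ piOut u := by rw [h2]; exact List.prefix_append _ _
    have hpo : piOut x <+: piOut y :=
      List.prefix_of_prefix_length_le (List.prefix_append _ _) hpy2 (by omega)
    obtain ⟨s, hs⟩ := hpx
    obtain ⟨t, ht⟩ := hpo
    obtain ⟨hu, hv⟩ := key_lemma hs.symm ht.symm hd
    refine ⟨Or.inr ⟨?_, ?_⟩, fun u' v' hd' => ?_⟩
    · intro c hc; rw [hu] at hc; obtain ⟨a, _, rfl⟩ := List.mem_map.1 hc; rfl
    · intro c hc; rw [hv] at hc; obtain ⟨a, _, rfl⟩ := List.mem_map.1 hc; rfl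
    · obtain ⟨hu', hv'⟩ := key_lemma hs.symm ht.symm hd'
      rw [hu, hv, hu', hv']; exact ⟨rfl, rfl⟩
  · have hpy : piIn y <+: piIn x ++ piIn u := by rw [h1]; exact List.prefix_append _ _
    have hpx : piIn x <+: piIn y :=
      List.prefix_of_prefix_length_le (List.prefix_append _ _) hpy (by omega)
    have hpy2 : piOut y <+: piOut x ++ piOut u := by rw [h2]; exact List.prefix_append _ _
    have hpo : piOut y <+: piOut x :=
      List.prefix_of_prefix_length_le hpy2 (List.prefix_append _ _) (by omega)
    obtain ⟨s, hs⟩ := hpx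
    obtain ⟨t, ht⟩ := hpo
    obtain ⟨hv, hu⟩ := key_lemma hs.symm ht.symm (isDiff_symm hd)
    refine ⟨Or.inl ⟨?_, ?_⟩, fun u' v' hd' => ?_⟩
    · intro c hc; rw [hu] at hc; obtain ⟨a, _, rfl⟩ := List.mem_map.1 hc; rfl
    · intro c hc; rw [hv] at hc; obtain ⟨a, _, rfl⟩ := List.mem_map.1 hc; rfl
    · obtain ⟨hv', hu'⟩ := key_lemma hs.symm ht.symm (isDiff_symm hd')
      rw [hu, hv, hu', hv']; exact ⟨rfl, rfl⟩
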